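/- If F is a graph on f vertices that is (s, k)-biseparable, then for any positive integer r, the Cartesian power H = F^{□r} is (r·f^{r-1}·s, k^r)-biseparable. -/

import Mathlib

/-- The `r`-fold Cartesian power of a graph `G`. -/
def cartPow {V : Type*} (G : SimpleGraph V) (r : ℕ) : SimpleGraph (Fin r → V) where
  Adj x y := ∃ i, G.Adj (x i) (y i) ∧ ∀ j, j ≠ i → x j = y j
  symm := by
    constructor
    rintro x y ⟨i, hadj, hrest⟩
    exact ⟨i, hadj.symm, fun j hj => (hrest j hj).symm⟩
  loopless := by
    constructor
    rintro x ⟨i, hadj, -⟩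
    exact hadj.ne rfl

/-- A graph `H` is `(s,k)`-biseparable if one can delete a set `E₁` of at most `s`
edges so that `H \ E₁` is bipartite and every connected component of `H \ E₁`
has at most `k` vertices. -/
def Biseparable {V : Type*} (H : SimpleGraph V) (s k : ℕ) : Prop :=
  ∃ E1 ⊆ H.edgeSet, E1.ncard ≤ s ∧ (H.deleteEdges E1).Colorable 2 ∧
    ∀ v : V, ((H.deleteEdges E1).connectedComponentMk v).supp.ncard ≤ k

lemma cartPow_reachable {V : Type*} {G : SimpleGraph V} {r : ℕ} {x y : Fin r → V}
    (h : (cartPow G r).Reachable x y) (i : Fin r) : G.Reachable (x i) (y i) := by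
  obtain ⟨w⟩ := h
  induction w with
  | nil => exact SimpleGraph.Reachable.refl _
  | cons hadj p ih =>
    obtain ⟨i0, ha, hrest⟩ := hadj
    by_cases hi : i = i0
    · subst hi
      exact (ha.reachable).trans ih
    · rw [hrest i hi]
      exact ih

lemma cartPow_colorable {V : Type*} {G : SimpleGraph V} (h : G.Colorable 2) (r : ℕ) :
    (cartPow G r).Colorable 2 := by
  obtain ⟨C⟩ := h
  set d : V → ZMod 2 := fun v => ((C v : ℕ) : ZMod 2) with hd_def
  have hkey : ∀ (a b : Fin 2), a ≠ b → ((a : ℕ) : ZMod 2) ≠ ((b : ℕ) : ZMod 2) := by decide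
  have hd : ∀ a b, G.Adj a b → d a ≠ d b := fun a b hab => hkey _ _ (C.valid hab)
  have C' : (cartPow G r).Coloring (ZMod 2) := by
    refine SimpleGraph.Coloring.mk (fun x => ∑ i, d (x i)) ?_
    rintro x y ⟨i, ha, hrest⟩ heq
    apply hd _ _ ha
    have h1 := Finset.add_sum_erase Finset.univ (fun j => d (x j)) (Finset.mem_univ i)
    have h2 := Finset.add_sum_erase Finset.univ (fun j => d (y j)) (Finset.mem_univ i)
    have h3 : ∑ j ∈ Finset.univ.erase i, d (x j) = ∑ j ∈ Finset.univ.erase i, d (y j) := by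
      refine Finset.sum_congr rfl fun j hj => ?_
      rw [hrest j (Finset.ne_of_mem_erase hj)]
    have : d (x i) + ∑ j ∈ Finset.univ.erase i, d (x j)
        = d (y i) + ∑ j ∈ Finset.univ.erase i, d (y j) := by
      rw [h1, h2]; exact heq
    rw [h3] at this
    exact add_right_cancel this
  simpa using C'.colorable

lemma cartPow_deleteEdges {V : Type*} (F : SimpleGraph V) (r : ℕ) (E1 : Set (Sym2 V))
    (hE1 : E1 ⊆ F.edgeSet) :
    (cartPow F r).deleteEdges
        {e | e ∈ (cartPow F r).edgeSet ∧ ∃ i, Sym2.map (· i) e ∈ E1}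
      = cartPow (F.deleteEdges E1) r := by
  ext x y
  simp only [SimpleGraph.deleteEdges_adj, Set.mem_setOf_eq]
  constructor
  · rintro ⟨⟨i, ha, hrest⟩, hne⟩
    refine ⟨i, SimpleGraph.deleteEdges_adj.mpr ⟨ha, fun hmem => hne ⟨⟨i, ha, hrest⟩, ⟨i, ?_⟩⟩⟩, hrest⟩
    rw [Sym2.map_pair_eq]; exact hmem
  · rintro ⟨i, hdel, hrest⟩
    obtain ⟨ha, hnm⟩ := SimpleGraph.deleteEdges_adj.mp hdel
    refine ⟨⟨i, ha, hrest⟩, ?_⟩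
    rintro ⟨-, j, hj⟩
    rw [Sym2.map_pair_eq] at hj
    by_cases hij : j = i
    · subst hij; exact hnm hj
    · rw [hrest j hij] at hj
      exact F.irrefl (hE1 hj)

lemma cartPow_supp_bound {V : Type*} [Fintype V] {G : SimpleGraph V} {k : ℕ} (r : ℕ)
    (hk : ∀ v : V, ((G.connectedComponentMk v).supp).ncard ≤ k) (v : Fin r → V) :
    (((cartPow G r).connectedComponentMk v).supp).ncard ≤ k ^ r := by
  have hsub : ((cartPow G r).connectedComponentMk v).supp ⊆
      Set.pi Set.univ (fun i => (G.connectedComponentMk (v i)).supp) := by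
    intro x hx
    have hreach : (cartPow G r).Reachable x v :=
      (SimpleGraph.ConnectedComponent.eq).mp ((SimpleGraph.ConnectedComponent.mem_supp_iff _ _).mp hx)
    intro i _
    exact (SimpleGraph.ConnectedComponent.eq).mpr (cartPow_reachable hreach i)
  calc (((cartPow G r).connectedComponentMk v).supp).ncard
      ≤ (Set.pi Set.univ (fun i => (G.connectedComponentMk (v i)).supp)).ncard :=
        Set.ncard_le_ncard hsub (Set.toFinite _)
    _ = Nat.card (∀ i, (G.connectedComponentMk (v i)).supp) := by
        rw [← Nat.card_coe_set_eq]
        exact Nat.card_congr (Equiv.Set.univPi _)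
    _ = ∏ i, ((G.connectedComponentMk (v i)).supp).ncard := by
        rw [Nat.card_pi]
        exact Finset.prod_congr rfl fun i _ => Nat.card_coe_set_eq _
    _ ≤ ∏ _i : Fin r, k := Finset.prod_le_prod' fun i _ => hk (v i)
    _ = k ^ r := by rw [Finset.prod_const, Finset.card_univ, Fintype.card_fin]

lemma card_fix {V : Type*} [Fintype V] {r : ℕ} (i : Fin r) (v0 : V) :
    Nat.card {z : Fin r → V // z i = v0} = Fintype.card V ^ (r - 1) := by
  classical
  have e : {z : Fin r → V // z i = v0} ≃ ({j : Fin r // j ≠ i} → V) := by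
    refine ⟨fun z j => z.1 j, fun g => ⟨fun j => if h : j = i then v0 else g ⟨j, h⟩, by simp⟩,
      ?_, ?_⟩
    · rintro ⟨z, hz⟩
      ext j
      by_cases h : j = i
      · subst h; simp [hz]
      · simp [h]
    · intro g
      funext j
      simp [j.2]
  rw [Nat.card_congr e, Nat.card_eq_fintype_card, Fintype.card_fun]
  congr 1
  have : Fintype.card {j : Fin r // j ≠ i} = Fintype.card (Fin r) - 1 := by
    rw [Fintype.card_subtype_compl, Fintype.card_subtype_eq]
  rw [this, Fintype.card_fin]

lemma cartPow_count {V : Type*} [Fintype V] [Nonempty V] (F : SimpleGraph V) {r s : ℕ}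
    (hr : 0 < r) (E1 : Set (Sym2 V)) (hE1 : E1 ⊆ F.edgeSet) (hs : E1.ncard ≤ s) :
    ({e | e ∈ (cartPow F r).edgeSet ∧ ∃ i, Sym2.map (· i) e ∈ E1}).ncard
      ≤ r * Fintype.card V ^ (r - 1) * s := by
  classical
  set E1' := {e | e ∈ (cartPow F r).edgeSet ∧ ∃ i, Sym2.map (· i) e ∈ E1} with hE1'
  obtain ⟨v0⟩ := ‹Nonempty V›
  have i0 : Fin r := ⟨0, hr⟩
  set P : (Fin r → V) → (Fin r → V) → (Fin r → Prop) :=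
    fun x y i => x i ≠ y i ∧ ∀ j, j ≠ i → x j = y j with hP
  have Puniq : ∀ {x y : Fin r → V} {i i'}, P x y i → P x y i' → i = i' := by
    rintro x y i i' ⟨h1, h2⟩ ⟨h1', h2'⟩
    by_contra hne
    exact h1 (h2' i hne)
  have Psymm : ∀ {x y : Fin r → V} {i}, P x y i → P y x i := by
    rintro x y i ⟨h1, h2⟩
    exact ⟨fun h => h1 h.symm, fun j hj => (h2 j hj).symm⟩
  set g2 : (Fin r → V) → (Fin r → V) → (Fin r × Sym2 V × (Fin r → V)) :=
    fun x y =>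
      if h : ∃ i, P x y i then
        (Classical.choose h, s(x (Classical.choose h), y (Classical.choose h)),
          Function.update x (Classical.choose h) v0)
      else (i0, s(v0, v0), fun _ => v0) with hg2
  have g2symm : ∀ x y, g2 x y = g2 y x := by
    intro x y
    by_cases h : ∃ i, P x y i
    · have h' : ∃ i, P y x i := ⟨Classical.choose h, Psymm (Classical.choose_spec h)⟩
      have hii : Classical.choose h = Classical.choose h' :=
        Puniq (Classical.choose_spec h) (Psymm (Classical.choose_spec h'))
      obtain ⟨-, h2⟩ := Classical.choose_spec h
      rw [hg2]
      simp only [dif_pos h, dif_pos h', ← hii]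
      refine congrArg _ (congrArg₂ _ (Sym2.eq_swap) ?_)
      funext j
      by_cases hj : j = Classical.choose h
      · subst hj; simp
      · simp only [Function.update_of_ne hj]
        exact h2 j hj
    · have h' : ¬ ∃ i, P y x i := fun ⟨i, hi⟩ => h ⟨i, Psymm hi⟩
      rw [hg2]; simp only [dif_neg h, dif_neg h']
  set g : Sym2 (Fin r → V) → (Fin r × Sym2 V × (Fin r → V)) := Sym2.lift ⟨g2, g2symm⟩ with hg
  set T : Set (Fin r × Sym2 V × (Fin r → V)) := {p | p.2.1 ∈ E1 ∧ p.2.2 p.1 = v0} with hT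
  have key : ∀ x y : Fin r → V, s(x, y) ∈ E1' →
      ∃ i, P x y i ∧ g s(x, y) = (i, s(x i, y i), Function.update x i v0) ∧
        s(x i, y i) ∈ E1 := by
    rintro x y ⟨hadj, j, hj⟩
    rw [SimpleGraph.mem_edgeSet] at hadj
    obtain ⟨i, hFadj, hrest⟩ := hadj
    have hPi : P x y i := ⟨hFadj.ne, hrest⟩
    have hex : ∃ i, P x y i := ⟨i, hPi⟩
    have hchoose : Classical.choose hex = i := Puniq (Classical.choose_spec hex) hPi
    refine ⟨i, hPi, ?_, ?_⟩
    · rw [hg, Sym2.lift_mk]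
      show g2 x y = _
      rw [hg2]
      simp only [dif_pos hex, hchoose]
    · rw [Sym2.map_pair_eq] at hj
      by_cases hji : j = i
      · subst hji; exact hj
      · rw [hrest j hji] at hj
        exact absurd (hE1 hj) (by simp)
  have recon : ∀ (x y : Fin r → V) (i : Fin r), (∀ j, j ≠ i → x j = y j) →
      s(x, y) = Sym2.map (fun a => Function.update (Function.update x i v0) i a)
        s(x i, y i) := by
    intro x y i hrest
    have h1 : Function.update (Function.update x i v0) i (x i) = x := by
      rw [Function.update_idem, Function.update_eq_self]
    have h2 : Function.update (Function.update x i v0) i (y i) = y := by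
      rw [Function.update_idem]
      funext j
      by_cases hj : j = i
      · subst hj; simp
      · simp only [Function.update_of_ne hj]
        exact hrest j hj
    rw [Sym2.map_pair_eq, h1, h2]
  have hmem : ∀ e ∈ E1', g e ∈ T := by
    intro e he
    induction e using Sym2.inductionOn with
    | hf x y =>
      obtain ⟨i, hPi, hge, hmem1⟩ := key x y he
      rw [hge]
      exact ⟨hmem1, Function.update_self _ _ _⟩
  have hinj : Set.InjOn g E1' := by
    intro e1 he1 e2 he2 heq
    induction e1 using Sym2.inductionOn with
    | hf x1 y1 =>
    induction e2 using Sym2.inductionOn with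
    | hf x2 y2 =>
      obtain ⟨i1, ⟨-, hrest1⟩, hge1, -⟩ := key x1 y1 he1
      obtain ⟨i2, ⟨-, hrest2⟩, hge2, -⟩ := key x2 y2 he2
      rw [hge1, hge2] at heq
      obtain ⟨hi, hrest⟩ := Prod.mk.injEq .. ▸ heq
      obtain ⟨hsym, hupd⟩ := Prod.mk.injEq .. ▸ hrest
      subst hi
      calc s(x1, y1)
          = Sym2.map (fun a => Function.update (Function.update x1 i1 v0) i1 a)
              s(x1 i1, y1 i1) := recon x1 y1 i1 hrest1
        _ = Sym2.map (fun a => Function.update (Function.update x2 i1 v0) i1 a)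
              s(x2 i1, y2 i1) := by rw [hupd, hsym]
        _ = s(x2, y2) := (recon x2 y2 i1 hrest2).symm
  have hcard : E1'.ncard ≤ T.ncard :=
    Set.ncard_le_ncard_of_injOn g hmem hinj (Set.toFinite _)
  refine hcard.trans ?_
  have eqv : T ≃ Σ i : Fin r, (E1 × {z : Fin r → V // z i = v0}) :=
    { toFun := fun p => ⟨p.1.1, ⟨⟨p.1.2.1, p.2.1⟩, ⟨p.1.2.2, p.2.2⟩⟩⟩
      invFun := fun q => ⟨(q.1, q.2.1.1, q.2.2.1), ⟨q.2.1.2, q.2.2.2⟩⟩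
      left_inv := fun p => rfl
      right_inv := fun q => rfl }
  have hTcard : T.ncard = ∑ i : Fin r, E1.ncard * Fintype.card V ^ (r - 1) := by
    rw [← Nat.card_coe_set_eq, Nat.card_congr eqv, Nat.card_eq_fintype_card,
      Fintype.card_sigma]
    refine Finset.sum_congr rfl fun i _ => ?_
    rw [← Nat.card_eq_fintype_card, Nat.card_prod, Nat.card_coe_set_eq, card_fix]
  rw [hTcard, Finset.sum_const, Finset.card_univ, Fintype.card_fin, smul_eq_mul]
  calc r * (E1.ncard * Fintype.card V ^ (r - 1))
      ≤ r * (s * Fintype.card V ^ (r - 1)) := by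
        exact Nat.mul_le_mul_left _ (Nat.mul_le_mul_right _ hs)
    _ = r * Fintype.card V ^ (r - 1) * s := by ring

set_option maxHeartbeats 1000000 in
/-- If `F` is a graph on `f` vertices that is `(s,k)`-biseparable, then for any positive
integer `r`, the Cartesian power `H = F^{□r}` is `(r·f^{r-1}·s, k^r)`-biseparable. -/
theorem stmt_4 {V : Type*} [Fintype V] (F : SimpleGraph V) (s k r : ℕ) (hr : 0 < r)
    (hF : Biseparable F s k) :
    Biseparable (cartPow F r) (r * Fintype.card V ^ (r - 1) * s) (k ^ r) := by
  rcases isEmpty_or_nonempty V with hV | hV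
  · have hempty : IsEmpty (Fin r → V) := ⟨fun f => isEmptyElim (f ⟨0, hr⟩)⟩
    refine ⟨∅, Set.empty_subset _, by simp, ?_, ?_⟩
    · exact SimpleGraph.Colorable.of_isEmpty (n := 2)
    · intro v
      exact isEmptyElim v
  · obtain ⟨E1, hE1sub, hE1card, hcol, hcomp⟩ := hF
    refine ⟨{e | e ∈ (cartPow F r).edgeSet ∧ ∃ i, Sym2.map (· i) e ∈ E1},
      fun e he => he.1, cartPow_count F hr E1 hE1sub hE1card, ?_, ?_⟩
    · rw [cartPow_deleteEdges F r E1 hE1sub]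
      exact cartPow_colorable hcol r
    · intro v
      rw [cartPow_deleteEdges F r E1 hE1sub]
      exact cartPow_supp_bound r hcomp v
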